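/- arXiv:math/0604033 — 4 statements merged into one kernel-verified Lean document; each statement's English description precedes it below -/
import Mathlib

section
/- Set α = i·(ω₂/2 − ω₁·ln(R)/(2π)) and β = i·(ω₂/2 + ω₁·ln(R)/(2π)). Then α and β lie on the open segment from 0 to iω₂ and are symmetric with respect to iω₂/2; the denominator of z vanishes at α, i.e. θ₄(πα/ω₁ + (i ln R)/2; q) = 0 (so z has a pole at α), and the numerator of z vanishes at β, i.e. θ₄(πβ/ω₁ − (i ln R)/2; q) = 0, so that z(β) = 0. -/
open scoped Real

noncomputable section

/-- Jacobi theta function θ₁(w;q). -/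
def jTheta1 (w : ℂ) (q : ℝ) : ℂ :=
  2 * ∑' n : ℕ, (-1 : ℂ) ^ n * ((q ^ (((n : ℝ) + 1 / 2) ^ 2) : ℝ) : ℂ) *
    Complex.sin (((2 * n + 1 : ℕ) : ℂ) * w)

/-- Jacobi theta function θ₂(w;q). -/
def jTheta2 (w : ℂ) (q : ℝ) : ℂ :=
  2 * ∑' n : ℕ, ((q ^ (((n : ℝ) + 1 / 2) ^ 2) : ℝ) : ℂ) *
    Complex.cos (((2 * n + 1 : ℕ) : ℂ) * w)

/-- Jacobi theta function θ₃(w;q). -/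
def jTheta3 (w : ℂ) (q : ℝ) : ℂ :=
  1 + 2 * ∑' n : ℕ, ((q ^ ((n + 1) ^ 2) : ℝ) : ℂ) *
    Complex.cos (((2 * (n + 1) : ℕ) : ℂ) * w)

/-- Jacobi theta function θ₄(w;q). -/
def jTheta4 (w : ℂ) (q : ℝ) : ℂ :=
  1 + 2 * ∑' n : ℕ, (-1 : ℂ) ^ (n + 1) * ((q ^ ((n + 1) ^ 2) : ℝ) : ℂ) *
    Complex.cos (((2 * (n + 1) : ℕ) : ℂ) * w)

/-- The conformal map z(u) = R·θ₄(πu/ω₁ − (i ln R)/2; q)/θ₄(πu/ω₁ + (i ln R)/2; q). -/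
def zmap (ω₁ R q : ℝ) (u : ℂ) : ℂ :=
  (R : ℂ) * jTheta4 ((π : ℂ) * u / (ω₁ : ℂ) - Complex.I * ((Real.log R : ℝ) : ℂ) / 2) q /
    jTheta4 ((π : ℂ) * u / (ω₁ : ℂ) + Complex.I * ((Real.log R : ℝ) : ℂ) / 2) q

end

/-- The key special value: θ₄(i·t/2 ; e^{-t}) = 0 for t > 0. -/
lemma jTheta4_special (t : ℝ) (ht : 0 < t) :
    jTheta4 (Complex.I * ((t / 2 : ℝ) : ℂ)) (Real.exp (-t)) = 0 := by
  classical
  set b : ℕ → ℝ := fun n => Real.exp (-(t * n * (n + 1))) with hbdef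
  set g : ℕ → ℂ := fun n => (-1 : ℂ) ^ n * ((b n : ℝ) : ℂ) with hgdef
  have hb_le : ∀ n : ℕ, b n ≤ Real.exp (-t) ^ n := by
    intro n
    rw [← Real.exp_nat_mul]
    apply Real.exp_le_exp.2
    have : (n : ℝ) ≤ (n : ℝ) * ((n : ℝ) + 1) := by nlinarith [Nat.cast_nonneg (α := ℝ) n]
    nlinarith
  have hgsum : Summable g := by
    apply Summable.of_norm
    have hnorm : ∀ n, ‖g n‖ = b n := by
      intro n
      rw [hgdef]
      simp only [norm_mul, norm_pow, norm_neg, norm_one, one_pow, one_mul,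
        Complex.norm_real, Real.norm_eq_abs]
      exact abs_of_pos (Real.exp_pos _)
    simp only [hnorm]
    exact Summable.of_nonneg_of_le (fun n => (Real.exp_pos _).le) hb_le
      (summable_geometric_of_lt_one (Real.exp_pos _).le
        (Real.exp_lt_one_iff.2 (by linarith)))
  have hgsum' : Summable (fun n => g (n + 1)) := (summable_nat_add_iff 1).2 hgsum
  have hterm : ∀ n : ℕ,
      (-1 : ℂ) ^ (n + 1) * ((Real.exp (-t) ^ ((n + 1) ^ 2) : ℝ) : ℂ) *
        Complex.cos (((2 * (n + 1) : ℕ) : ℂ) * (Complex.I * ((t / 2 : ℝ) : ℂ)))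
      = (g (n + 1) - g n) / 2 := by
    intro n
    have hcos : (((2 * (n + 1) : ℕ) : ℂ) * (Complex.I * ((t / 2 : ℝ) : ℂ)))
        = (((n + 1 : ℕ) : ℂ) * (t : ℂ)) * Complex.I := by push_cast; ring
    have hch : Complex.cosh ((((n : ℕ) + 1 : ℕ) : ℂ) * (t : ℂ)) =
        (Complex.exp ((((n : ℕ) + 1 : ℕ) : ℂ) * (t : ℂ)) +
          Complex.exp (-((((n : ℕ) + 1 : ℕ) : ℂ) * (t : ℂ)))) / 2 := by
      rw [eq_div_iff (two_ne_zero' ℂ), mul_comm, Complex.two_cosh]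
    rw [hcos, Complex.cos_mul_I, hch]
    have hq : ((Real.exp (-t) ^ ((n + 1) ^ 2) : ℝ) : ℂ)
        = Complex.exp (-(t : ℂ) * ((n + 1 : ℕ) : ℂ) ^ 2) := by
      rw [← Real.exp_nat_mul, Complex.ofReal_exp]
      push_cast; ring_nf
    rw [hq]
    have e1 : Complex.exp (-(t : ℂ) * ((n + 1 : ℕ) : ℂ) ^ 2) *
        Complex.exp (((n + 1 : ℕ) : ℂ) * (t : ℂ)) = ((b n : ℝ) : ℂ) := by
      rw [← Complex.exp_add, hbdef, Complex.ofReal_exp]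
      congr 1; push_cast; ring
    have e2 : Complex.exp (-(t : ℂ) * ((n + 1 : ℕ) : ℂ) ^ 2) *
        Complex.exp (-(((n + 1 : ℕ) : ℂ) * (t : ℂ))) = ((b (n + 1) : ℝ) : ℂ) := by
      rw [← Complex.exp_add, hbdef, Complex.ofReal_exp]
      congr 1; push_cast; ring
    have : (-1 : ℂ) ^ (n + 1) * Complex.exp (-(t : ℂ) * ((n + 1 : ℕ) : ℂ) ^ 2) *
        ((Complex.exp (((n + 1 : ℕ) : ℂ) * (t : ℂ)) +
          Complex.exp (-(((n + 1 : ℕ) : ℂ) * (t : ℂ)))) / 2)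
        = (-1 : ℂ) ^ (n + 1) * (((b n : ℝ) : ℂ) + ((b (n + 1) : ℝ) : ℂ)) / 2 := by
      rw [← e1, ← e2]; ring
    rw [this, hgdef]
    simp only [pow_succ]
    ring
  have htsum : (∑' n : ℕ, (-1 : ℂ) ^ (n + 1) * ((Real.exp (-t) ^ ((n + 1) ^ 2) : ℝ) : ℂ) *
      Complex.cos (((2 * (n + 1) : ℕ) : ℂ) * (Complex.I * ((t / 2 : ℝ) : ℂ)))) = -1 / 2 := by
    rw [tsum_congr hterm]
    have hsh : g 0 + (∑' n : ℕ, g (n + 1)) = ∑' n : ℕ, g n := by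
      have := Summable.sum_add_tsum_nat_add (f := g) 1 hgsum
      simpa using this
    have hsub : (∑' n : ℕ, (g (n + 1) - g n)) = -g 0 := by
      rw [Summable.tsum_sub hgsum' hgsum, ← hsh]
      ring
    have h0 : g 0 = 1 := by simp [hgdef, hbdef]
    rw [tsum_div_const, hsub, h0]
  rw [jTheta4, htsum]
  ring

/-- The pole α and zero β of the map z: both lie on the open segment from 0 to iω₂,
are symmetric with respect to iω₂/2, the denominator of z vanishes at α and the
numerator vanishes at β, so that z(β) = 0. -/
theorem zmap_pole_and_zero (ω₁ ω₂ R : ℝ) (hω₁ : 0 < ω₁) (hω₂ : 0 < ω₂)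
    (hR : 1 < R) (hR2 : R < Real.exp (π * ω₂ / ω₁)) (q : ℝ)
    (hq : q = Real.exp (-(π * ω₂ / ω₁)))
    (α β : ℂ)
    (hα : α = Complex.I * ((ω₂ / 2 - ω₁ * Real.log R / (2 * π) : ℝ) : ℂ))
    (hβ : β = Complex.I * ((ω₂ / 2 + ω₁ * Real.log R / (2 * π) : ℝ) : ℂ)) :
    α.re = 0 ∧ 0 < α.im ∧ α.im < ω₂ ∧
    β.re = 0 ∧ 0 < β.im ∧ β.im < ω₂ ∧
    α + β = Complex.I * (ω₂ : ℂ) ∧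
    jTheta4 ((π : ℂ) * α / (ω₁ : ℂ) + Complex.I * ((Real.log R : ℝ) : ℂ) / 2) q = 0 ∧
    jTheta4 ((π : ℂ) * β / (ω₁ : ℂ) - Complex.I * ((Real.log R : ℝ) : ℂ) / 2) q = 0 ∧
    zmap ω₁ R q β = 0 := by
  have hπ : (0 : ℝ) < π := Real.pi_pos
  have hL : 0 < Real.log R := Real.log_pos hR
  have hL2 : Real.log R < π * ω₂ / ω₁ := (Real.log_lt_iff_lt_exp (by linarith)).2 hR2
  have hLw : ω₁ * Real.log R / (2 * π) < ω₂ / 2 := by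
    rw [div_lt_div_iff₀ (by positivity) (by norm_num)]
    rw [lt_div_iff₀ hω₁] at hL2
    nlinarith
  have hLpos : 0 < ω₁ * Real.log R / (2 * π) := by positivity
  have ht : 0 < π * ω₂ / ω₁ := by positivity
  have hre : ∀ r : ℝ, (Complex.I * (r : ℂ)).re = 0 := fun r => by simp
  have him : ∀ r : ℝ, (Complex.I * (r : ℂ)).im = r := fun r => by simp
  have hαre : α.re = 0 := by rw [hα, hre]
  have hαim : α.im = ω₂ / 2 - ω₁ * Real.log R / (2 * π) := by rw [hα, him]
  have hβre : β.re = 0 := by rw [hβ, hre]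
  have hβim : β.im = ω₂ / 2 + ω₁ * Real.log R / (2 * π) := by rw [hβ, him]
  have hω₁' : (ω₁ : ℂ) ≠ 0 := by exact_mod_cast hω₁.ne'
  have hπ' : (π : ℂ) ≠ 0 := by exact_mod_cast hπ.ne'
  have hargα : (π : ℂ) * α / (ω₁ : ℂ) + Complex.I * ((Real.log R : ℝ) : ℂ) / 2
      = Complex.I * (((π * ω₂ / ω₁) / 2 : ℝ) : ℂ) := by
    rw [hα]
    push_cast
    field_simp
    ring_nf
  have hargβ : (π : ℂ) * β / (ω₁ : ℂ) - Complex.I * ((Real.log R : ℝ) : ℂ) / 2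
      = Complex.I * (((π * ω₂ / ω₁) / 2 : ℝ) : ℂ) := by
    rw [hβ]
    push_cast
    field_simp
    ring_nf
  have hz : jTheta4 (Complex.I * (((π * ω₂ / ω₁) / 2 : ℝ) : ℂ)) q = 0 := by
    rw [hq]; exact jTheta4_special _ ht
  refine ⟨hαre, ?_, ?_, hβre, ?_, ?_, ?_, ?_, ?_, ?_⟩
  · rw [hαim]; linarith
  · rw [hαim]; linarith
  · rw [hβim]; linarith
  · rw [hβim]; linarith
  · rw [hα, hβ]
    push_cast
    ring
  · rw [hargα]; exact hz
  · rw [hargβ]; exact hz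
  · rw [zmap, hargβ, hz, mul_zero, zero_div]
end

section
/- For every integer n ≥ 1 and every η ∈ (−π/2, π/2), the n-th derivative of arctan evaluated at x = tan η satisfies (dⁿ/dxⁿ) arctan(x)|_{x = tan η} = −(n−1)!·cos^{2n}(η)·Σ_{m=0}^{⌊(n−1)/2⌋} (−1)^{n−m}·C(n, 2m+1)·tan^{n−2m−1}(η), where C(n, j) denotes the binomial coefficient. -/
open scoped Real

lemma sin_nat_mul_expand (n : ℕ) (hn : 1 ≤ n) (θ : ℝ) :
    Real.sin (n * θ) = ∑ m ∈ Finset.range ((n - 1) / 2 + 1),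
      (-1 : ℝ) ^ m * (Nat.choose n (2 * m + 1) : ℝ) *
        Real.cos θ ^ (n - (2 * m + 1)) * Real.sin θ ^ (2 * m + 1) := by
  have key : (Complex.cos θ + Complex.sin θ * Complex.I) ^ n
      = Complex.cos ((n * θ : ℝ) : ℂ) + Complex.sin ((n * θ : ℝ) : ℂ) * Complex.I := by
    rw [← Complex.exp_mul_I, ← Complex.exp_mul_I, ← Complex.exp_nat_mul]
    congr 1
    push_cast
    ring
  have h0 : Real.sin (n * θ)
      = ((Complex.cos θ + Complex.sin θ * Complex.I) ^ n).im := by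
    rw [key, ← Complex.ofReal_cos, ← Complex.ofReal_sin]
    simp only [Complex.add_im, Complex.ofReal_im, Complex.mul_im, Complex.ofReal_re,
      Complex.I_im, Complex.I_re, mul_zero, zero_mul, mul_one, zero_add, add_zero]
  have expand : (Complex.cos θ + Complex.sin θ * Complex.I) ^ n
      = ∑ j ∈ Finset.range (n + 1),
          ((Real.sin θ : ℂ)) ^ j * Complex.I ^ j * ((Real.cos θ : ℂ)) ^ (n - j)
            * (Nat.choose n j : ℂ) := by
    rw [← Complex.ofReal_cos, ← Complex.ofReal_sin, add_comm, add_pow]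
    refine Finset.sum_congr rfl fun j hj => by push_cast; ring
  rw [h0, expand, Complex.im_sum]
  have him : ∀ j, (((Real.sin θ : ℂ)) ^ j * Complex.I ^ j * ((Real.cos θ : ℂ)) ^ (n - j)
      * (Nat.choose n j : ℂ)).im
      = if j % 2 = 1 then
          (-1 : ℝ) ^ (j / 2) * (Nat.choose n j : ℝ) * Real.cos θ ^ (n - j) * Real.sin θ ^ j
        else 0 := by
    intro j
    rcases Nat.even_or_odd j with ⟨q, hq⟩ | ⟨q, hq⟩
    · have hq' : j = 2 * q := by omega
      subst hq'
      have hI : Complex.I ^ (2 * q) = (((-1 : ℝ) ^ q : ℝ) : ℂ) := by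
        rw [pow_mul, Complex.I_sq]; push_cast; ring
      rw [hI]
      have : ((Real.sin θ : ℂ)) ^ (2 * q) * (((-1 : ℝ) ^ q : ℝ) : ℂ)
          * ((Real.cos θ : ℂ)) ^ (n - 2 * q) * (Nat.choose n (2 * q) : ℂ)
          = ((Real.sin θ ^ (2 * q) * (-1 : ℝ) ^ q * Real.cos θ ^ (n - 2 * q)
              * (Nat.choose n (2 * q) : ℝ) : ℝ) : ℂ) := by push_cast; ring
      rw [this, Complex.ofReal_im]
      simp [Nat.mul_mod_right]
    · subst hq
      have hI : Complex.I ^ (2 * q + 1) = (((-1 : ℝ) ^ q : ℝ) : ℂ) * Complex.I := by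
        rw [pow_succ, pow_mul, Complex.I_sq]; push_cast; ring
      rw [hI]
      have : ((Real.sin θ : ℂ)) ^ (2 * q + 1) * ((((-1 : ℝ) ^ q : ℝ) : ℂ) * Complex.I)
          * ((Real.cos θ : ℂ)) ^ (n - (2 * q + 1)) * (Nat.choose n (2 * q + 1) : ℂ)
          = ((Real.sin θ ^ (2 * q + 1) * (-1 : ℝ) ^ q * Real.cos θ ^ (n - (2 * q + 1))
              * (Nat.choose n (2 * q + 1) : ℝ) : ℝ) : ℂ) * Complex.I := by push_cast; ring
      rw [this]
      simp only [Complex.mul_im, Complex.ofReal_im, Complex.ofReal_re, Complex.I_im,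
        Complex.I_re, mul_zero, zero_mul, mul_one, zero_add]
      have hmod : (2 * q + 1) % 2 = 1 := by omega
      have hdiv : (2 * q + 1) / 2 = q := by omega
      rw [if_pos hmod, hdiv]
      ring
  simp_rw [him]
  rw [← Finset.sum_filter]
  have hset : Finset.filter (fun j => j % 2 = 1) (Finset.range (n + 1))
      = Finset.image (fun m => 2 * m + 1) (Finset.range ((n - 1) / 2 + 1)) := by
    ext j
    simp only [Finset.mem_filter, Finset.mem_range, Finset.mem_image]
    constructor
    · rintro ⟨h1, h2⟩
      exact ⟨j / 2, by omega, by omega⟩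
    · rintro ⟨m, hm, rfl⟩
      omega
  rw [hset, Finset.sum_image (fun a _ b _ h => by omega)]
  refine Finset.sum_congr rfl fun m hm => ?_
  have h2 : (2 * m + 1) / 2 = m := by omega
  rw [h2]


noncomputable def arctanDerivAux (n : ℕ) (x : ℝ) : ℝ :=
  (Nat.factorial (n - 1) : ℝ) * (-1 : ℝ) ^ (n - 1) * Real.cos (Real.arctan x) ^ n *
    Real.sin (n * (π / 2 - Real.arctan x))

lemma hasDerivAt_arctanDerivAux (n : ℕ) (hn : 1 ≤ n) (x : ℝ) :
    HasDerivAt (arctanDerivAux n) (arctanDerivAux (n + 1) x) x := by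
  obtain ⟨k, rfl⟩ : ∃ k, n = k + 1 := ⟨n - 1, by omega⟩
  set a := Real.arctan x with ha
  have hA : HasDerivAt Real.arctan (1 / (1 + x ^ 2)) x := Real.hasDerivAt_arctan x
  have h1 : HasDerivAt (fun x => Real.cos (Real.arctan x)) (-Real.sin a * (1 / (1 + x ^ 2))) x :=
    by have h := (Real.hasDerivAt_cos a).comp x hA; exact h
  have h1n : HasDerivAt (fun x => Real.cos (Real.arctan x) ^ (k + 1))
      ((k + 1 : ℕ) * Real.cos a ^ k * (-Real.sin a * (1 / (1 + x ^ 2)))) x := by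
    have h := h1.pow (k + 1)
    simp only [Nat.add_sub_cancel] at h
    exact h
  have h2i : HasDerivAt (fun x => ((k + 1 : ℕ) : ℝ) * (π / 2 - Real.arctan x))
      (((k + 1 : ℕ) : ℝ) * (-(1 / (1 + x ^ 2)))) x :=
    (hA.const_sub (π / 2)).const_mul _
  have h2 : HasDerivAt (fun x => Real.sin (((k + 1 : ℕ) : ℝ) * (π / 2 - Real.arctan x)))
      (Real.cos (((k + 1 : ℕ) : ℝ) * (π / 2 - a)) * (((k + 1 : ℕ) : ℝ) * (-(1 / (1 + x ^ 2))))) x :=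
    (Real.hasDerivAt_sin _).comp x h2i
  have hprod := ((h1n.mul h2).const_mul
    ((Nat.factorial ((k + 1) - 1) : ℝ) * (-1 : ℝ) ^ ((k + 1) - 1)))
  have hfun : (fun y => (Nat.factorial ((k + 1) - 1) : ℝ) * (-1 : ℝ) ^ ((k + 1) - 1) *
      (Real.cos (Real.arctan y) ^ (k + 1) * Real.sin (((k + 1 : ℕ) : ℝ) * (π / 2 - Real.arctan y))))
      = arctanDerivAux (k + 1) := by
    funext y
    unfold arctanDerivAux
    ring
  simp only [Pi.mul_apply] at hprod
  rw [hfun] at hprod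
  refine hprod.congr_deriv ?_
  have hc : (1 : ℝ) / (1 + x ^ 2) = Real.cos a ^ 2 := (Real.cos_sq_arctan x).symm
  rw [hc]
  unfold arctanDerivAux
  rw [← ha]
  have e1 : (k + 1 + 1 - 1) = k + 1 := by omega
  have e2 : (k + 1 - 1) = k := by omega
  rw [e1, e2]
  have hfac : (Nat.factorial (k + 1) : ℝ) = (k + 1) * Nat.factorial k := by
    push_cast [Nat.factorial_succ]; ring
  have hsin : Real.sin (((k + 1 + 1 : ℕ) : ℝ) * (π / 2 - a))
      = Real.sin (((k + 1 : ℕ) : ℝ) * (π / 2 - a)) * Real.sin a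
        + Real.cos (((k + 1 : ℕ) : ℝ) * (π / 2 - a)) * Real.cos a := by
    have : ((k + 1 + 1 : ℕ) : ℝ) * (π / 2 - a)
        = ((k + 1 : ℕ) : ℝ) * (π / 2 - a) + (π / 2 - a) := by push_cast; ring
    rw [this, Real.sin_add, Real.cos_pi_div_two_sub, Real.sin_pi_div_two_sub]
  rw [hsin, hfac]
  push_cast
  ring

lemma iteratedDeriv_arctan_eq (n : ℕ) (hn : 1 ≤ n) :
    iteratedDeriv n Real.arctan = arctanDerivAux n := by
  induction n, hn using Nat.le_induction with
  | base =>
    funext x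
    rw [iteratedDeriv_one, Real.deriv_arctan]
    unfold arctanDerivAux
    have h1 : Real.sin (((1 : ℕ) : ℝ) * (π / 2 - Real.arctan x)) = Real.cos (Real.arctan x) := by
      rw [Nat.cast_one, one_mul, Real.sin_pi_div_two_sub]
    rw [h1]
    have h2 := Real.cos_sq_arctan x
    simp only [Nat.factorial, pow_one]
    nlinarith [h2]
  | succ n hn ih =>
    funext x
    rw [iteratedDeriv_succ, ih]
    exact (hasDerivAt_arctanDerivAux n hn x).deriv


open scoped Real

/-- Closed formula for the n-th derivative of arctan at the point tan η. -/
theorem iteratedDeriv_arctan_at_tan (n : ℕ) (hn : 1 ≤ n) (η : ℝ)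
    (hη1 : -(π / 2) < η) (hη2 : η < π / 2) :
    iteratedDeriv n Real.arctan (Real.tan η) =
      -((Nat.factorial (n - 1) : ℝ)) * Real.cos η ^ (2 * n) *
        ∑ m ∈ Finset.range ((n - 1) / 2 + 1),
          (-1 : ℝ) ^ (n - m) * (Nat.choose n (2 * m + 1) : ℝ) *
            Real.tan η ^ (n - 2 * m - 1) := by

  have hcos : Real.cos η ≠ 0 := by
    have := Real.cos_pos_of_mem_Ioo ⟨hη1, hη2⟩
    linarith
  rw [iteratedDeriv_arctan_eq n hn]
  unfold arctanDerivAux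
  rw [Real.arctan_tan hη1 hη2]
  rw [sin_nat_mul_expand n hn (π / 2 - η)]
  simp only [Real.cos_pi_div_two_sub, Real.sin_pi_div_two_sub]
  rw [Finset.mul_sum, Finset.mul_sum]
  refine Finset.sum_congr rfl fun m hm => ?_
  rw [Finset.mem_range] at hm
  have h2m : 2 * m + 1 ≤ n := by omega
  obtain ⟨k, rfl⟩ : ∃ k, n = 2 * m + 1 + k := ⟨n - (2 * m + 1), by omega⟩
  have e1 : 2 * m + 1 + k - 1 = 2 * m + k := by omega
  have e2 : 2 * m + 1 + k - m = m + 1 + k := by omega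
  have e3 : 2 * m + 1 + k - 2 * m - 1 = k := by omega
  have e4 : 2 * m + 1 + k - (2 * m + 1) = k := by omega
  rw [e1, e2, e3, e4, Real.tan_eq_sin_div_cos, div_pow]
  have s1 : (-1 : ℝ) ^ (2 * m + k) = (-1) ^ k := by
    rw [pow_add, pow_mul, neg_one_sq, one_pow, one_mul]
  have s2 : (-1 : ℝ) ^ (m + 1 + k) = (-1) ^ m * (-1) * (-1) ^ k := by
    rw [pow_add, pow_add, pow_one]
  rw [s1, s2]
  rw [mul_comm (2 : ℕ) (2 * m + 1 + k)]
  field_simp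
  ring
end

section
/- For every η ∈ (0, π/2) and every real ε with |ε| < 1, the series Σ_{n=1}^∞ (εⁿ/n)·sinⁿ(η)·Σ_{m=0}^{⌊(n−1)/2⌋} (−1)^m·C(n, 2m+1)·sin^{n−2m−1}(η)·cos^{2m+1}(η) converges and arctan(tan(η)·(1−ε)) = η − Σ_{n=1}^∞ (εⁿ/n)·sinⁿ(η)·Σ_{m=0}^{⌊(n−1)/2⌋} (−1)^m·C(n, 2m+1)·sin^{n−2m−1}(η)·cos^{2m+1}(η). In particular arctan(tan(η)(1−ε)) = η − ε·cos(η)sin(η) − ε²·cos(η)sin³(η) − (ε³/3)·cos(η)sin³(η)(4sin²(η) − 1) − ε⁴·cos(η)sin⁵(η)(2sin²(η) − 1) + O(ε⁵) as ε → 0. -/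
open scoped Real

private lemma I_pow_odd (m : ℕ) : Complex.I ^ (2 * m + 1) = ((-1 : ℝ) ^ m : ℂ) * Complex.I := by
  rw [pow_succ, pow_mul, Complex.I_sq]
  push_cast
  ring

private lemma I_pow_even_im (m : ℕ) : (Complex.I ^ (2 * m)).im = 0 := by
  rw [pow_mul, Complex.I_sq]
  have : ((-1 : ℂ)) ^ m = (((-1 : ℝ) ^ m : ℝ) : ℂ) := by push_cast; ring
  rw [this, Complex.ofReal_im]

private lemma inner_sum_eq (s c : ℝ) (n : ℕ) :
    ∑ m ∈ Finset.range (n / 2 + 1),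
        (-1 : ℝ) ^ m * ((n + 1).choose (2 * m + 1) : ℝ) * s ^ (n - 2 * m) * c ^ (2 * m + 1)
      = (((s : ℂ) + (c : ℂ) * Complex.I) ^ (n + 1)).im := by
  rw [add_pow, Complex.im_sum]
  symm
  rw [← Finset.sum_filter_of_ne (p := fun k => Odd (n + 1 - k))
    (fun k hk hne => by
      by_contra hodd
      rw [Nat.not_odd_iff_even] at hodd
      obtain ⟨m, hm⟩ := hodd
      have h2 : n + 1 - k = 2 * m := by omega
      apply hne
      rw [mul_pow, h2]
      simp [Complex.mul_im, I_pow_even_im m, ← Complex.ofReal_pow])]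
  refine Finset.sum_nbij' (i := fun k => (n - k) / 2) (j := fun m => n - 2 * m) ?_ ?_ ?_ ?_ ?_
  · intro k hk
    simp only [Finset.mem_filter, Finset.mem_range] at hk ⊢
    obtain ⟨hk1, m, hm⟩ := hk
    omega
  · intro m hm
    simp only [Finset.mem_filter, Finset.mem_range] at hm ⊢
    refine ⟨by omega, ⟨m, by omega⟩⟩
  · intro k hk
    simp only [Finset.mem_filter, Finset.mem_range] at hk
    obtain ⟨hk1, m, hm⟩ := hk
    omega
  · intro m hm
    simp only [Finset.mem_range] at hm
    omega
  · intro k hk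
    simp only [Finset.mem_filter, Finset.mem_range] at hk
    obtain ⟨hk1, m, hm⟩ := hk
    have h1 : n + 1 - k = 2 * m + 1 := by omega
    have h2 : (n - k) / 2 = m := by omega
    have h3 : n - 2 * m = k := by omega
    have h4 : (n + 1).choose k = (n + 1).choose (2 * m + 1) := by
      rw [show k = (n + 1) - (2 * m + 1) by omega, Nat.choose_symm (by omega)]
    rw [h1, h2, h3, h4, mul_pow, I_pow_odd]
    have : (s : ℂ) ^ k * ((c : ℂ) ^ (2 * m + 1) * (((-1 : ℝ) ^ m : ℂ) * Complex.I)) *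
        (((n + 1).choose (2 * m + 1) : ℕ) : ℂ)
        = ((( s ^ k * c ^ (2 * m + 1) * (-1) ^ m * ((n + 1).choose (2 * m + 1) : ℝ)) : ℝ) : ℂ)
          * Complex.I := by
      push_cast
      ring
    rw [this, Complex.mul_I_im, Complex.ofReal_re]
    ring

private lemma hasSum_core {b : ℝ} (θ : ℝ) (hb : |b| < 1) :
    HasSum (fun n : ℕ => b ^ (n + 1) * Real.sin ((n + 1) * θ) / (n + 1))
      (Real.arctan (b * Real.sin θ / (1 - b * Real.cos θ))) := by
  set z : ℂ := (b : ℂ) * Complex.exp ((θ : ℂ) * Complex.I) with hzdef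
  have hnz : ‖z‖ < 1 := by
    rw [hzdef]
    simp only [norm_mul, Complex.norm_real, Real.norm_eq_abs, Complex.norm_exp_ofReal_mul_I,
      mul_one]
    exact hb
  have h1 := Complex.hasSum_taylorSeries_neg_log hnz
  have h2 : HasSum (fun n : ℕ => z ^ (n + 1) / ((n : ℂ) + 1)) (-Complex.log (1 - z)) := by
    have := (hasSum_nat_add_iff' (f := fun n : ℕ => z ^ n / (n : ℂ)) 1).mpr h1
    simpa using this
  have h3 := h2.mapL Complex.imCLM
  have hre : (1 - z).re = 1 - b * Real.cos θ := by
    simp [hzdef, Complex.sub_re, Complex.mul_re, Complex.exp_ofReal_mul_I_re,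
      Complex.exp_ofReal_mul_I_im]
  have him : (1 - z).im = -(b * Real.sin θ) := by
    simp [hzdef, Complex.sub_im, Complex.mul_im, Complex.exp_ofReal_mul_I_re,
      Complex.exp_ofReal_mul_I_im]
  have hrepos : 0 < (1 - z).re := by
    rw [hre]
    have h1 : b * Real.cos θ ≤ |b * Real.cos θ| := le_abs_self _
    have h2 : |b * Real.cos θ| = |b| * |Real.cos θ| := abs_mul _ _
    have h3 : |Real.cos θ| ≤ 1 := Real.abs_cos_le_one θ
    nlinarith [abs_nonneg b]
  have harg : Complex.arg (1 - z) = Real.arctan (-(b * Real.sin θ) / (1 - b * Real.cos θ)) := by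
    have habs : |Complex.arg (1 - z)| < π / 2 :=
      Complex.abs_arg_lt_pi_div_two_iff.mpr (Or.inl hrepos)
    rw [← hre, ← him, ← Complex.tan_arg,
      Real.arctan_tan (abs_lt.mp habs).1 (abs_lt.mp habs).2]
  have hval : (-Complex.log (1 - z)).im = Real.arctan (b * Real.sin θ / (1 - b * Real.cos θ)) := by
    rw [Complex.neg_im, Complex.log_im, harg, neg_div, Real.arctan_neg, neg_neg]
  have hterm : ∀ n : ℕ, (z ^ (n + 1) / ((n : ℂ) + 1)).im
      = b ^ (n + 1) * Real.sin ((n + 1) * θ) / (n + 1) := by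
    intro n
    have hz1 : z ^ (n + 1) / ((n : ℂ) + 1)
        = ((b ^ (n + 1) / (n + 1) : ℝ) : ℂ) * Complex.exp ((((n + 1) * θ : ℝ)) * Complex.I) := by
      rw [hzdef, mul_pow, ← Complex.exp_nat_mul]
      push_cast
      ring
    rw [hz1, Complex.mul_im, Complex.ofReal_re, Complex.ofReal_im,
      Complex.exp_ofReal_mul_I_im]
    ring
  convert h3 using 1
  · funext n
    rw [Complex.imCLM_apply, hterm n]
  · rw [Complex.imCLM_apply, hval]

private lemma arctan_id (η : ℝ) (hη1 : 0 < η) (hη2 : η < π / 2) {ε : ℝ} (hε : |ε| < 1) :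
    Real.arctan (Real.tan η * (1 - ε))
      = η - Real.arctan (ε * Real.sin η * Real.cos η / (1 - ε * Real.sin η * Real.sin η)) := by
  have hpi := Real.pi_pos
  set s := Real.sin η with hs_def
  set c := Real.cos η with hc_def
  have hs : 0 < s := Real.sin_pos_of_pos_of_lt_pi hη1 (by linarith)
  have hc : 0 < c := Real.cos_pos_of_mem_Ioo ⟨by linarith, hη2⟩
  have hs1 : s ≤ 1 := Real.sin_le_one η
  have hpyth : s ^ 2 + c ^ 2 = 1 := Real.sin_sq_add_cos_sq η
  have hd : 0 < 1 - ε * s * s := by nlinarith [le_abs_self ε, abs_nonneg ε]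
  set u := ε * s * c / (1 - ε * s * s) with hu_def
  set B := Real.arctan u with hB_def
  have hcosB : 0 < Real.cos B := Real.cos_arctan_pos u
  have hsinB : Real.sin B = u * Real.cos B := by
    have h := Real.tan_arctan u
    rw [Real.tan_eq_sin_div_cos] at h
    field_simp at h
    rw [← hB_def] at h
    linarith [h]
  have hcosA : Real.cos (η - B) = (c + s * u) * Real.cos B := by
    rw [Real.cos_sub, hsinB]; ring
  have hsinA : Real.sin (η - B) = (s - c * u) * Real.cos B := by
    rw [Real.sin_sub, hsinB]; ring
  have hcsu : c + s * u = c / (1 - ε * s * s) := by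
    rw [hu_def, eq_div_iff hd.ne', add_mul, mul_div_assoc', div_mul_cancel₀ _ hd.ne']; ring
  have hscu : s - c * u = s * (1 - ε) / (1 - ε * s * s) := by
    rw [hu_def, eq_div_iff hd.ne', sub_mul, mul_div_assoc', div_mul_cancel₀ _ hd.ne']; linear_combination (-(ε * s)) * hpyth
  have htanA : Real.tan (η - B) = Real.tan η * (1 - ε) := by
    rw [Real.tan_eq_sin_div_cos, hsinA, hcosA, hscu, hcsu, Real.tan_eq_sin_div_cos, ← hs_def,
      ← hc_def]
    rw [mul_div_mul_right _ _ hcosB.ne', div_div_div_cancel_right₀ hd.ne']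
    ring
  have hBub : B < π / 2 := Real.arctan_lt_pi_div_two u
  have harctan_cs : Real.arctan (c / s) = π / 2 - η := by
    have : c / s = Real.tan (π / 2 - η) := by
      rw [Real.tan_pi_div_two_sub, Real.tan_eq_sin_div_cos, ← hs_def, ← hc_def]
      rw [inv_div]
    rw [this, Real.arctan_tan (by linarith) (by linarith)]
  have hBlb : η - π / 2 < B := by
    have h2 : -(c / s) < u := by
      rw [hu_def, ← neg_div, div_lt_div_iff₀ hs hd]
      nlinarith
    have := Real.arctan_strictMono h2
    rw [Real.arctan_neg, harctan_cs] at this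
    linarith
  rw [← htanA, Real.arctan_tan (by linarith) (by linarith)]

private lemma key_hasSum (η : ℝ) (hη1 : 0 < η) (hη2 : η < π / 2) {ε : ℝ} (hε : |ε| < 1) :
    HasSum (fun n : ℕ =>
        (ε * Real.sin η) ^ (n + 1) * Real.sin ((n + 1) * (π / 2 - η)) / (n + 1))
      (η - Real.arctan (Real.tan η * (1 - ε))) := by
  have hpi := Real.pi_pos
  have hs : 0 < Real.sin η := Real.sin_pos_of_pos_of_lt_pi hη1 (by linarith)
  have hs1 : Real.sin η ≤ 1 := Real.sin_le_one η
  have hb : |ε * Real.sin η| < 1 := by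
    rw [abs_mul, abs_of_pos hs]
    calc |ε| * Real.sin η ≤ |ε| * 1 := by
          exact mul_le_mul_of_nonneg_left hs1 (abs_nonneg ε)
      _ = |ε| := mul_one _
      _ < 1 := hε
  have h := hasSum_core (b := ε * Real.sin η) (π / 2 - η) hb
  rw [Real.sin_pi_div_two_sub, Real.cos_pi_div_two_sub] at h
  rw [arctan_id η hη1 hη2 hε, sub_sub_cancel]
  convert h using 3 <;> ring

/-- Taylor expansion of arctan(tan η·(1−ε)): the series converges for |ε| < 1 and sums to
η − arctan(tan η·(1−ε)); in particular the expansion up to order ε⁴ with O(ε⁵) remainder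
holds as ε → 0. -/
theorem arctan_tan_expansion (η : ℝ) (hη1 : 0 < η) (hη2 : η < π / 2) :
    (∀ ε : ℝ, |ε| < 1 →
      Summable (fun n : ℕ =>
        (ε ^ (n + 1) / (n + 1)) * Real.sin η ^ (n + 1) *
          ∑ m ∈ Finset.range (n / 2 + 1),
            (-1 : ℝ) ^ m * (Nat.choose (n + 1) (2 * m + 1) : ℝ) *
              Real.sin η ^ (n - 2 * m) * Real.cos η ^ (2 * m + 1)) ∧
      Real.arctan (Real.tan η * (1 - ε)) =
        η - ∑' n : ℕ,
          (ε ^ (n + 1) / (n + 1)) * Real.sin η ^ (n + 1) *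
            ∑ m ∈ Finset.range (n / 2 + 1),
              (-1 : ℝ) ^ m * (Nat.choose (n + 1) (2 * m + 1) : ℝ) *
                Real.sin η ^ (n - 2 * m) * Real.cos η ^ (2 * m + 1)) ∧
    (∃ C > (0 : ℝ), ∃ ε₀ > (0 : ℝ), ∀ ε : ℝ, |ε| < ε₀ →
      |Real.arctan (Real.tan η * (1 - ε)) -
          (η - ε * Real.cos η * Real.sin η - ε ^ 2 * Real.cos η * Real.sin η ^ 3
            - (ε ^ 3 / 3) * Real.cos η * Real.sin η ^ 3 * (4 * Real.sin η ^ 2 - 1)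
            - ε ^ 4 * Real.cos η * Real.sin η ^ 5 * (2 * Real.sin η ^ 2 - 1))|
        ≤ C * |ε| ^ 5) := by
  have hpi := Real.pi_pos
  have hfun : ∀ ε : ℝ, ∀ n : ℕ,
      (ε ^ (n + 1) / (n + 1)) * Real.sin η ^ (n + 1) *
          ∑ m ∈ Finset.range (n / 2 + 1),
            (-1 : ℝ) ^ m * (Nat.choose (n + 1) (2 * m + 1) : ℝ) *
              Real.sin η ^ (n - 2 * m) * Real.cos η ^ (2 * m + 1)
        = (ε * Real.sin η) ^ (n + 1) * Real.sin ((n + 1) * (π / 2 - η)) / (n + 1) := by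
    intro ε n
    rw [inner_sum_eq (Real.sin η) (Real.cos η) n]
    have hexp : ((Real.sin η : ℂ) + (Real.cos η : ℂ) * Complex.I)
        = Complex.exp (((π / 2 - η : ℝ) : ℂ) * Complex.I) := by
      rw [Complex.exp_mul_I, ← Complex.ofReal_cos, ← Complex.ofReal_sin,
        Real.cos_pi_div_two_sub, Real.sin_pi_div_two_sub]
    rw [hexp, ← Complex.exp_nat_mul,
      show ((n + 1 : ℕ) : ℂ) * (((π / 2 - η : ℝ) : ℂ) * Complex.I)
        = ((((n : ℝ) + 1) * (π / 2 - η) : ℝ) : ℂ) * Complex.I by push_cast; ring,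
      Complex.exp_ofReal_mul_I_im, mul_pow]
    ring
  constructor
  · intro ε hε
    have key := key_hasSum η hη1 hη2 hε
    have key' : HasSum (fun n : ℕ =>
        (ε ^ (n + 1) / (n + 1)) * Real.sin η ^ (n + 1) *
          ∑ m ∈ Finset.range (n / 2 + 1),
            (-1 : ℝ) ^ m * (Nat.choose (n + 1) (2 * m + 1) : ℝ) *
              Real.sin η ^ (n - 2 * m) * Real.cos η ^ (2 * m + 1))
        (η - Real.arctan (Real.tan η * (1 - ε))) := by
      convert key using 1
      exact funext (hfun ε)
    constructor
    · exact key'.summable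
    · rw [key'.tsum_eq]
      ring
  · refine ⟨2, by norm_num, 1 / 2, by norm_num, fun ε hε => ?_⟩
    have hε1 : |ε| < 1 := by linarith
    have key := key_hasSum η hη1 hη2 hε1
    set s := Real.sin η with hs_def
    set c := Real.cos η with hc_def
    set θ := π / 2 - η with hθ_def
    have hpyth : s ^ 2 + c ^ 2 = 1 := Real.sin_sq_add_cos_sq η
    have tail := (hasSum_nat_add_iff'
      (f := fun n : ℕ => (ε * s) ^ (n + 1) * Real.sin ((n + 1) * θ) / (n + 1)) 4).mpr key
    have e1 : Real.sin θ = c := by rw [hθ_def, Real.sin_pi_div_two_sub, hc_def]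
    have e1c : Real.cos θ = s := by rw [hθ_def, Real.cos_pi_div_two_sub, hs_def]
    have e2 : Real.sin (2 * θ) = 2 * c * s := by
      rw [Real.sin_two_mul, e1, e1c]
    have e2c : Real.cos (2 * θ) = 2 * s ^ 2 - 1 := by
      rw [Real.cos_two_mul, e1c]
    have e3 : Real.sin (3 * θ) = 3 * c - 4 * c ^ 3 := by
      rw [Real.sin_three_mul, e1]
    have e4 : Real.sin (4 * θ) = 4 * c * s * (2 * s ^ 2 - 1) := by
      rw [show (4 : ℝ) * θ = 2 * (2 * θ) by ring, Real.sin_two_mul, e2, e2c]; ring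
    have hQ : ∑ i ∈ Finset.range 4, (ε * s) ^ (i + 1) * Real.sin ((i + 1) * θ) / (i + 1)
        = ε * c * s + ε ^ 2 * c * s ^ 3 + (ε ^ 3 / 3) * c * s ^ 3 * (4 * s ^ 2 - 1)
          + ε ^ 4 * c * s ^ 5 * (2 * s ^ 2 - 1) := by
      norm_num [Finset.sum_range_succ]
      rw [e1, e2, e3, e4]
      field_simp
      linear_combination (-4 * ε ^ 3 * s ^ 3 * c) * hpyth
    rw [hQ] at tail
    have hbound : ∀ n : ℕ,
        ‖(ε * s) ^ (n + 4 + 1) * Real.sin ((((n + 4 : ℕ) : ℝ) + 1) * θ) / (((n + 4 : ℕ) : ℝ) + 1)‖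
          ≤ |ε| ^ 5 * (1 / 2) ^ n := by
      intro n
      push_cast
      have hs0 : 0 < s := Real.sin_pos_of_pos_of_lt_pi hη1 (by linarith)
      have hs1 : s ≤ 1 := Real.sin_le_one η
      have h1 : |ε * s| ≤ |ε| := by
        rw [abs_mul, abs_of_pos hs0]
        calc |ε| * s ≤ |ε| * 1 := mul_le_mul_of_nonneg_left hs1 (abs_nonneg ε)
          _ = |ε| := mul_one _
      have hden : (1 : ℝ) ≤ |(n : ℝ) + 4 + 1| := by
        rw [abs_of_pos (by positivity)]
        have := Nat.cast_nonneg (α := ℝ) n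
        linarith
      calc ‖(ε * s) ^ (n + 4 + 1) * Real.sin (((n : ℝ) + 4 + 1) * θ) / ((n : ℝ) + 4 + 1)‖
          = |(ε * s) ^ (n + 4 + 1) * Real.sin (((n : ℝ) + 4 + 1) * θ)| / |(n : ℝ) + 4 + 1| := by
            rw [Real.norm_eq_abs, abs_div]
        _ ≤ |(ε * s) ^ (n + 4 + 1) * Real.sin (((n : ℝ) + 4 + 1) * θ)| := by
            apply div_le_self (abs_nonneg _) hden
        _ = |ε * s| ^ (n + 4 + 1) * |Real.sin (((n : ℝ) + 4 + 1) * θ)| := by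
            rw [abs_mul, abs_pow]
        _ ≤ |ε| ^ (n + 4 + 1) * 1 := by
            apply mul_le_mul (pow_le_pow_left₀ (abs_nonneg _) h1 _)
              (Real.abs_sin_le_one _) (abs_nonneg _) (by positivity)
        _ = |ε| ^ 5 * |ε| ^ n := by rw [mul_one, ← pow_add]; ring_nf
        _ ≤ |ε| ^ 5 * (1 / 2) ^ n := by
            apply mul_le_mul_of_nonneg_left
              (pow_le_pow_left₀ (abs_nonneg ε) hε.le n) (by positivity)
    have hgeom : HasSum (fun n : ℕ => |ε| ^ 5 * (1 / 2) ^ n) (|ε| ^ 5 * 2) := by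
      have h := (hasSum_geometric_of_lt_one (by norm_num : (0:ℝ) ≤ 1 / 2)
        (by norm_num)).mul_left (|ε| ^ 5)
      convert h using 1
      congr 1; norm_num
    have hfinal := tsum_of_norm_bounded hgeom hbound
    rw [tail.tsum_eq] at hfinal
    rw [Real.norm_eq_abs] at hfinal
    have heq : Real.arctan (Real.tan η * (1 - ε)) -
          (η - ε * c * s - ε ^ 2 * c * s ^ 3
            - (ε ^ 3 / 3) * c * s ^ 3 * (4 * s ^ 2 - 1)
            - ε ^ 4 * c * s ^ 5 * (2 * s ^ 2 - 1))
        = -(η - Real.arctan (Real.tan η * (1 - ε)) -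
            (ε * c * s + ε ^ 2 * c * s ^ 3 + (ε ^ 3 / 3) * c * s ^ 3 * (4 * s ^ 2 - 1)
              + ε ^ 4 * c * s ^ 5 * (2 * s ^ 2 - 1))) := by ring
    rw [heq, abs_neg]
    calc |η - Real.arctan (Real.tan η * (1 - ε)) -
            (ε * c * s + ε ^ 2 * c * s ^ 3 + (ε ^ 3 / 3) * c * s ^ 3 * (4 * s ^ 2 - 1)
              + ε ^ 4 * c * s ^ 5 * (2 * s ^ 2 - 1))| ≤ |ε| ^ 5 * 2 := hfinal
      _ = 2 * |ε| ^ 5 := by ring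
end

section
/- Fix η ∈ (0, π/2) and define k(q₁) = θ₄(0;q₁)²/θ₃(0;q₁)². Then as q₁ → 0⁺, (1/√(k(q₁)))·θ₁(η;q₁)/θ₂(η;q₁) = tan(η) + 4·q₁·tan(η) + O(q₁²); that is, there exist C > 0 and q₀ ∈ (0,1) such that |(1/√(k(q₁)))·θ₁(η;q₁)/θ₂(η;q₁) − tan(η)·(1 + 4q₁)| ≤ C·q₁² for all 0 < q₁ < q₀. -/
open scoped Real

/- ### Auxiliary lemmas -/

lemma geom_tail (q : ℝ) (hq0 : 0 < q) (hq : q ≤ 1/2) (f : ℕ → ℝ)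
    (hs : ∀ n, |f n| ≤ q ^ (2*n))
    (k : ℕ) (ht : ∀ n, |f (n+1)| ≤ q ^ (2+k) * (q^2) ^ n) :
    |(∑' n, f n) - f 0| ≤ 2 * q ^ (2+k) := by
  have hq1 : q < 1 := lt_of_le_of_lt hq (by norm_num)
  have hq2 : q^2 < 1 := by nlinarith
  have hq2' : (0:ℝ) ≤ q^2 := sq_nonneg q
  have hsum : Summable f := by
    apply Summable.of_norm_bounded (summable_geometric_of_lt_one hq2' hq2)
    intro n
    simpa [pow_mul] using hs n
  have htail : Summable (fun n => f (n+1)) := (summable_nat_add_iff 1).2 hsum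
  rw [Summable.tsum_eq_zero_add hsum]
  have h1 : |∑' n, f (n+1)| ≤ ∑' n, q ^ (2+k) * (q^2)^n := by
    calc |∑' n, f (n+1)| ≤ ∑' n, |f (n+1)| := by
          rw [← Real.norm_eq_abs]
          refine (norm_tsum_le_tsum_norm ?_).trans ?_
          · simpa only [Real.norm_eq_abs] using htail.abs
          · simp [Real.norm_eq_abs]
      _ ≤ ∑' n, q ^ (2+k) * (q^2)^n := by
          apply Summable.tsum_le_tsum ht htail.abs
          exact (summable_geometric_of_lt_one hq2' hq2).mul_left _
  have h2 : ∑' n : ℕ, q ^ (2+k) * (q^2)^n = q^(2+k) * (1 - q^2)⁻¹ := by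
    rw [tsum_mul_left, tsum_geometric_of_lt_one hq2' hq2]
  have h3 : (1 - q^2)⁻¹ ≤ 2 := by
    rw [inv_le_iff_one_le_mul₀ (by nlinarith)]
    nlinarith
  have hqk : (0:ℝ) < q ^ (2+k) := pow_pos hq0 _
  calc |f 0 + (∑' n, f (n+1)) - f 0| = |∑' n, f (n+1)| := by rw [add_sub_cancel_left]
    _ ≤ q^(2+k) * (1 - q^2)⁻¹ := by rw [← h2]; exact h1
    _ ≤ 2 * q^(2+k) := by nlinarith

lemma est_gen (q : ℝ) (hq0 : 0 < q) (hq : q ≤ 1/2) (e : ℕ → ℝ) (he : ∀ n, |e n| ≤ 1)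
    (g : ℕ → ℕ) (hg : ∀ n, 2*n ≤ g n) (k : ℕ) (hg2 : ∀ n, 2*n+2+k ≤ g (n+1)) :
    |(∑' n, e n * q ^ (g n)) - e 0 * q ^ (g 0)| ≤ 2 * q ^ (2+k) := by
  have hq1 : q ≤ 1 := hq.trans (by norm_num)
  have habs : ∀ n, |e n * q ^ (g n)| ≤ q ^ (g n) := fun n => by
    rw [abs_mul, abs_of_nonneg (pow_nonneg hq0.le _)]
    exact mul_le_of_le_one_left (pow_nonneg hq0.le _) (he n)
  exact geom_tail q hq0 hq _
    (fun n => (habs n).trans (pow_le_pow_of_le_one hq0.le hq1 (hg n)))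
    k
    (fun n => by
      refine (habs (n+1)).trans ?_
      calc q ^ g (n+1) ≤ q ^ (2*n+2+k) := pow_le_pow_of_le_one hq0.le hq1 (hg2 n)
        _ = q ^ (2+k) * (q^2)^n := by ring)

lemma estA1 (η q : ℝ) (hq0 : 0 < q) (hq : q ≤ 1/2) :
    |(∑' n : ℕ, (-1:ℝ)^n * q ^ (n^2+n) * Real.sin ((2*(n:ℝ)+1)*η)) - Real.sin η| ≤ 2*q^2 := by
  have h := est_gen q hq0 hq (fun n => (-1:ℝ)^n * Real.sin ((2*(n:ℝ)+1)*η))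
    (fun n => by
      rw [abs_mul, abs_pow, abs_neg, abs_one, one_pow, one_mul]
      exact Real.abs_sin_le_one _)
    (fun n => n^2+n) (fun n => by nlinarith) 0 (fun n => by nlinarith)
  have heq : (∑' n : ℕ, (-1:ℝ)^n * q ^ (n^2+n) * Real.sin ((2*(n:ℝ)+1)*η))
      = ∑' n : ℕ, ((-1:ℝ)^n * Real.sin ((2*(n:ℝ)+1)*η)) * q ^ (n^2+n) :=
    tsum_congr (fun n => by ring)
  rw [heq]
  convert h using 2 <;> norm_num

lemma estA2 (η q : ℝ) (hq0 : 0 < q) (hq : q ≤ 1/2) :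
    |(∑' n : ℕ, (1:ℝ)^n * q ^ (n^2+n) * Real.cos ((2*(n:ℝ)+1)*η)) - Real.cos η| ≤ 2*q^2 := by
  have h := est_gen q hq0 hq (fun n => (1:ℝ)^n * Real.cos ((2*(n:ℝ)+1)*η))
    (fun n => by
      rw [abs_mul, abs_pow, abs_one, one_pow, one_mul]
      exact Real.abs_cos_le_one _)
    (fun n => n^2+n) (fun n => by nlinarith) 0 (fun n => by nlinarith)
  have heq : (∑' n : ℕ, (1:ℝ)^n * q ^ (n^2+n) * Real.cos ((2*(n:ℝ)+1)*η))
      = ∑' n : ℕ, ((1:ℝ)^n * Real.cos ((2*(n:ℝ)+1)*η)) * q ^ (n^2+n) :=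
    tsum_congr (fun n => by ring)
  rw [heq]
  convert h using 2 <;> norm_num

lemma estA3 (q : ℝ) (hq0 : 0 < q) (hq : q ≤ 1/2) :
    |(∑' n : ℕ, (1:ℝ)^n * q ^ ((n+1)^2)) - q| ≤ 2*q^3 := by
  have h := est_gen q hq0 hq (fun n => (1:ℝ)^n)
    (fun n => by rw [abs_pow, abs_one, one_pow])
    (fun n => (n+1)^2) (fun n => by nlinarith) 1 (fun n => by nlinarith)
  convert h using 2 <;> norm_num

lemma estA4 (q : ℝ) (hq0 : 0 < q) (hq : q ≤ 1/2) :
    |(∑' n : ℕ, (-1:ℝ)^(n+1) * q ^ ((n+1)^2)) + q| ≤ 2*q^3 := by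
  have h := est_gen q hq0 hq (fun n => (-1:ℝ)^(n+1))
    (fun n => by rw [abs_pow, abs_neg, abs_one, one_pow])
    (fun n => (n+1)^2) (fun n => by nlinarith) 1 (fun n => by nlinarith)
  convert h using 2 <;> norm_num

lemma rpow_split (q : ℝ) (hq0 : 0 < q) (n : ℕ) :
    q ^ (((n : ℝ) + 1 / 2) ^ 2) = q ^ ((1:ℝ)/4) * q ^ (n^2+n) := by
  have h : ((n : ℝ) + 1 / 2) ^ 2 = (1:ℝ)/4 + ((n^2+n : ℕ):ℝ) := by push_cast; ring
  rw [h, Real.rpow_add hq0, Real.rpow_natCast]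

lemma jTheta1_real (η q : ℝ) (hq0 : 0 < q) :
    jTheta1 (η:ℂ) q =
      ((2 * (q ^ ((1:ℝ)/4) * ∑' n : ℕ, (-1:ℝ)^n * q ^ (n^2+n) * Real.sin ((2*(n:ℝ)+1)*η)) : ℝ) : ℂ) := by
  rw [jTheta1]
  have h : ∀ n : ℕ, (-1 : ℂ) ^ n * ((q ^ (((n : ℝ) + 1 / 2) ^ 2) : ℝ) : ℂ) *
      Complex.sin (((2 * n + 1 : ℕ) : ℂ) * (η:ℂ)) =
      (((q ^ ((1:ℝ)/4) * ((-1:ℝ)^n * q ^ (n^2+n) * Real.sin ((2*(n:ℝ)+1)*η)) : ℝ)) : ℂ) := by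
    intro n
    rw [rpow_split q hq0 n,
      show (((2 * n + 1 : ℕ) : ℂ) * (η:ℂ)) = (((2*(n:ℝ)+1)*η : ℝ):ℂ) by push_cast; ring,
      ← Complex.ofReal_sin]
    push_cast
    ring
  rw [tsum_congr h, ← Complex.ofReal_tsum, tsum_mul_left]
  push_cast
  ring

lemma jTheta2_real (η q : ℝ) (hq0 : 0 < q) :
    jTheta2 (η:ℂ) q =
      ((2 * (q ^ ((1:ℝ)/4) * ∑' n : ℕ, (1:ℝ)^n * q ^ (n^2+n) * Real.cos ((2*(n:ℝ)+1)*η)) : ℝ) : ℂ) := by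
  rw [jTheta2]
  have h : ∀ n : ℕ, ((q ^ (((n : ℝ) + 1 / 2) ^ 2) : ℝ) : ℂ) *
      Complex.cos (((2 * n + 1 : ℕ) : ℂ) * (η:ℂ)) =
      (((q ^ ((1:ℝ)/4) * ((1:ℝ)^n * q ^ (n^2+n) * Real.cos ((2*(n:ℝ)+1)*η)) : ℝ)) : ℂ) := by
    intro n
    rw [rpow_split q hq0 n,
      show (((2 * n + 1 : ℕ) : ℂ) * (η:ℂ)) = (((2*(n:ℝ)+1)*η : ℝ):ℂ) by push_cast; ring,
      ← Complex.ofReal_cos]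
    push_cast
    ring
  rw [tsum_congr h, ← Complex.ofReal_tsum, tsum_mul_left]
  push_cast
  ring

lemma jTheta3_real (q : ℝ) :
    jTheta3 0 q = ((1 + 2 * ∑' n : ℕ, (1:ℝ)^n * q ^ ((n+1)^2) : ℝ) : ℂ) := by
  rw [jTheta3]
  have h : ∀ n : ℕ, ((q ^ ((n + 1) ^ 2) : ℝ) : ℂ) *
      Complex.cos (((2 * (n + 1) : ℕ) : ℂ) * 0) =
      ((((1:ℝ)^n * q ^ ((n+1)^2) : ℝ)) : ℂ) := by
    intro n; simp
  rw [tsum_congr h, ← Complex.ofReal_tsum]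
  push_cast
  ring

lemma jTheta4_real (q : ℝ) :
    jTheta4 0 q = ((1 + 2 * ∑' n : ℕ, (-1:ℝ)^(n+1) * q ^ ((n+1)^2) : ℝ) : ℂ) := by
  rw [jTheta4]
  have h : ∀ n : ℕ, (-1 : ℂ) ^ (n + 1) * ((q ^ ((n + 1) ^ 2) : ℝ) : ℂ) *
      Complex.cos (((2 * (n + 1) : ℕ) : ℂ) * 0) =
      ((((-1:ℝ)^(n+1) * q ^ ((n+1)^2) : ℝ)) : ℂ) := by
    intro n; push_cast; simp
  rw [tsum_congr h, ← Complex.ofReal_tsum]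
  push_cast
  ring

set_option maxHeartbeats 1000000 in
/-- Asymptotic expansion of sn(iα,k)/i = (1/√k)·θ₁(η;q₁)/θ₂(η;q₁) as q₁ → 0⁺, for fixed
η ∈ (0, π/2): it equals tan η + 4q₁·tan η + O(q₁²). -/
theorem sn_expansion (η : ℝ) (hη1 : 0 < η) (hη2 : η < π / 2) :
    ∃ C > (0 : ℝ), ∃ q₀ ∈ Set.Ioo (0 : ℝ) 1, ∀ q₁ : ℝ, 0 < q₁ → q₁ < q₀ →
      ‖(1 / (((jTheta4 0 q₁) ^ 2 / (jTheta3 0 q₁) ^ 2) ^ ((1 : ℂ) / 2)))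
              * (jTheta1 (η : ℂ) q₁ / jTheta2 (η : ℂ) q₁)
            - ((Real.tan η + 4 * q₁ * Real.tan η : ℝ) : ℂ)‖ ≤ C * q₁ ^ 2 := by
  set s := Real.sin η with hs_def
  set c := Real.cos η with hc_def
  have hc : 0 < c := Real.cos_pos_of_mem_Ioo ⟨by linarith [Real.pi_pos], hη2⟩
  have hs : 0 < s := Real.sin_pos_of_pos_of_lt_pi hη1 (by linarith [Real.pi_pos])
  have hs1 : s ≤ 1 := Real.sin_le_one η
  have hc1 : c ≤ 1 := Real.cos_le_one η
  refine ⟨120 / c^2, by positivity, min (1/4) (c/2), ⟨by positivity, lt_of_le_of_lt (min_le_left _ _) (by norm_num)⟩, ?_⟩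
  intro q hq0 hqlt
  have hq14 : q < 1/4 := lt_of_lt_of_le hqlt (min_le_left _ _)
  have hqc : q < c/2 := lt_of_lt_of_le hqlt (min_le_right _ _)
  have hq12 : q ≤ 1/2 := by linarith
  rw [jTheta1_real η q hq0, jTheta2_real η q hq0, jTheta3_real q, jTheta4_real q]
  set A1 := ∑' n : ℕ, (-1:ℝ)^n * q ^ (n^2+n) * Real.sin ((2*(n:ℝ)+1)*η) with hA1_def
  set A2 := ∑' n : ℕ, (1:ℝ)^n * q ^ (n^2+n) * Real.cos ((2*(n:ℝ)+1)*η) with hA2_def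
  set A3 := ∑' n : ℕ, (1:ℝ)^n * q ^ ((n+1)^2) with hA3_def
  set A4 := ∑' n : ℕ, (-1:ℝ)^(n+1) * q ^ ((n+1)^2) with hA4_def
  have e1 : |A1 - s| ≤ 2*q^2 := estA1 η q hq0 hq12
  have e2 : |A2 - c| ≤ 2*q^2 := estA2 η q hq0 hq12
  have e3 : |A3 - q| ≤ 2*q^3 := estA3 q hq0 hq12
  have e4 : |A4 + q| ≤ 2*q^3 := estA4 q hq0 hq12
  have e1' := abs_le.1 e1
  have e2' := abs_le.1 e2
  have e3' := abs_le.1 e3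
  have e4' := abs_le.1 e4
  -- basic positivity facts
  have hq3 : q^3 ≤ q^2 := by nlinarith
  have hP3 : (0:ℝ) < 1 + 2*A3 := by nlinarith
  have hP4 : (2:ℝ)/5 ≤ 1 + 2*A4 := by nlinarith
  have hP4' : (0:ℝ) < 1 + 2*A4 := by linarith
  have hA2c : c/2 ≤ A2 := by nlinarith
  have hA2pos : 0 < A2 := by linarith
  have hq4 : (0:ℝ) < q ^ ((1:ℝ)/4) := Real.rpow_pos_of_pos hq0 _
  clear_value A1 A2 A3 A4
  have hpow : ((((1 + 2*A4 : ℝ)):ℂ) ^ 2 / (((1 + 2*A3 : ℝ)):ℂ) ^ 2) ^ ((1:ℂ)/2)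
      = ((((1+2*A4)/(1+2*A3) : ℝ)) : ℂ) := by
    have h1 : (((1 + 2*A4 : ℝ)):ℂ) ^ 2 / (((1 + 2*A3 : ℝ)):ℂ) ^ 2
        = ((((1+2*A4)^2/(1+2*A3)^2 : ℝ)) : ℂ) := by push_cast; ring
    have hnn : (0:ℝ) ≤ (1+2*A4)^2/(1+2*A3)^2 := by positivity
    rw [h1, show ((1:ℂ)/2) = (((1/2 : ℝ) : ℝ):ℂ) by norm_num,
      ← Complex.ofReal_cpow hnn (1/2)]
    congr 1
    rw [show (1+2*A4)^2/(1+2*A3)^2 = ((1+2*A4)/(1+2*A3))^2 by rw [div_pow],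
      ← Real.sqrt_eq_rpow, Real.sqrt_sq_eq_abs, abs_of_pos (by positivity)]
  rw [hpow]
  have hred : (1 / ((((1+2*A4)/(1+2*A3) : ℝ)) : ℂ))
        * (((2 * (q ^ ((1:ℝ)/4) * A1) : ℝ):ℂ) / ((2 * (q ^ ((1:ℝ)/4) * A2) : ℝ):ℂ))
        - ((Real.tan η + 4 * q * Real.tan η : ℝ) : ℂ)
      = ((1 / ((1+2*A4)/(1+2*A3)) * ((2 * (q ^ ((1:ℝ)/4) * A1)) / (2 * (q ^ ((1:ℝ)/4) * A2)))
          - (Real.tan η + 4 * q * Real.tan η) : ℝ) : ℂ) := by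
    push_cast
    ring
  rw [hred, Complex.norm_real, Real.norm_eq_abs]
  -- now a purely real estimate
  set N := (1+2*A3)*A1*c - s*(1+4*q)*(1+2*A4)*A2 with hN_def
  set D := (1+2*A4)*A2*c with hD_def
  have hDpos : 0 < D := by positivity
  have htan : Real.tan η = s / c := Real.tan_eq_sin_div_cos η
  have hx : q ^ ((1:ℝ)/4) ≠ 0 := ne_of_gt hq4
  have hA2ne : A2 ≠ 0 := ne_of_gt hA2pos
  have hP4ne : (1+2*A4) ≠ 0 := ne_of_gt hP4'
  have hP3ne : (1+2*A3) ≠ 0 := ne_of_gt hP3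
  have hcne : c ≠ 0 := ne_of_gt hc
  have key : 1 / ((1+2*A4)/(1+2*A3)) * ((2 * (q ^ ((1:ℝ)/4) * A1)) / (2 * (q ^ ((1:ℝ)/4) * A2)))
      - (Real.tan η + 4 * q * Real.tan η) = N / D := by
    rw [htan, hN_def, hD_def, one_div_div,
      mul_div_mul_left _ _ (two_ne_zero : (2:ℝ) ≠ 0), mul_div_mul_left _ _ hx]
    field_simp
  rw [key, abs_div, abs_of_pos hDpos]
  clear hpow hred key hx hA2ne hP3ne hcne htan hqlt hA1_def hA2_def hA3_def hA4_def
  clear e1' e2' hs_def hc_def hq4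
  have hq3' : 4*q^3 ≤ q^2 := by nlinarith
  have hcb : c*(1+2*q) ≤ 3/2 := by nlinarith
  have hsb2 : s*(1+4*q)*(1-2*q) ≤ 2 := by nlinarith
  have hsb : s*(1+4*q) ≤ 2 := by nlinarith
  -- bound the numerator
  have hq2b : 2*q^2 ≤ 1 := by nlinarith
  have hA1b : |A1| ≤ 2 := by
    have := abs_le.1 e1
    rw [abs_le]; constructor <;> nlinarith [abs_nonneg (A1 - s)]
  have hA2b : |A2| ≤ 2 := by
    have := abs_le.1 e2
    rw [abs_le]; constructor <;> nlinarith [abs_nonneg (A2 - c)]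
  have hNexp : N = 8*q^2*s*c + c*(1+2*q)*(A1-s) - s*(1+4*q)*(1-2*q)*(A2-c)
      + 2*(A3-q)*c*A1 - 2*(A4+q)*s*(1+4*q)*A2 := by
    rw [hN_def]; ring
  have hsc1 : s*c ≤ 1 := by nlinarith
  have h1 : |8*q^2*s*c| ≤ 8*q^2 := by
    rw [abs_of_pos (by positivity)]
    nlinarith [mul_le_mul_of_nonneg_left hsc1 (by positivity : (0:ℝ) ≤ 8*q^2)]
  have h2 : |c*(1+2*q)*(A1-s)| ≤ 3*q^2 := by
    rw [abs_mul, abs_of_pos (by positivity : (0:ℝ) < c*(1+2*q))]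
    calc c*(1+2*q) * |A1 - s| ≤ 3/2 * (2*q^2) :=
          mul_le_mul hcb e1 (abs_nonneg _) (by norm_num)
      _ = 3*q^2 := by ring
  have h3 : |s*(1+4*q)*(1-2*q)*(A2-c)| ≤ 4*q^2 := by
    rw [abs_mul, abs_of_pos (mul_pos (mul_pos hs (by linarith : (0:ℝ) < 1+4*q)) (by linarith : (0:ℝ) < 1-2*q) : (0:ℝ) < s*(1+4*q)*(1-2*q))]
    calc s*(1+4*q)*(1-2*q) * |A2 - c| ≤ 2 * (2*q^2) :=
          mul_le_mul hsb2 e2 (abs_nonneg _) (by norm_num)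
      _ = 4*q^2 := by ring
  have h4 : |2*(A3-q)*c*A1| ≤ 8*q^3 := by
    have : |2*(A3-q)*c*A1| = 2 * |A3 - q| * c * |A1| := by
      rw [show (2:ℝ)*(A3-q)*c*A1 = (A3-q)*(2*c*A1) by ring, abs_mul, abs_mul, abs_mul]
      rw [abs_of_nonneg (by norm_num : (0:ℝ) ≤ 2), abs_of_pos hc]
      ring
    rw [this]
    have hin : |A3 - q| * |A1| ≤ 2*q^3*2 :=
      mul_le_mul e3 hA1b (abs_nonneg A1) (mul_nonneg (by norm_num) (pow_nonneg hq0.le 3) : (0:ℝ) ≤ 2*q^3)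
    calc 2 * |A3 - q| * c * |A1| = (2*c) * (|A3 - q| * |A1|) := by ring
      _ ≤ 2 * (2*q^3*2) :=
          mul_le_mul (by linarith : (2:ℝ)*c ≤ 2) hin
            (mul_nonneg (abs_nonneg _) (abs_nonneg _)) (by norm_num)
      _ = 8*q^3 := by ring
  have h5 : |2*(A4+q)*s*(1+4*q)*A2| ≤ 16*q^3 := by
    have : |2*(A4+q)*s*(1+4*q)*A2| = 2 * |A4 + q| * (s*(1+4*q)) * |A2| := by
      rw [show (2:ℝ)*(A4+q)*s*(1+4*q)*A2 = (A4+q)*(2*(s*(1+4*q))*A2) by ring,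
        abs_mul, abs_mul, abs_mul]
      rw [abs_of_nonneg (by norm_num : (0:ℝ) ≤ 2), abs_of_pos (by positivity : (0:ℝ) < s*(1+4*q))]
      ring
    rw [this]
    have hin : |A4 + q| * |A2| ≤ 2*q^3*2 :=
      mul_le_mul e4 hA2b (abs_nonneg A2) (mul_nonneg (by norm_num) (pow_nonneg hq0.le 3) : (0:ℝ) ≤ 2*q^3)
    calc 2 * |A4 + q| * (s*(1+4*q)) * |A2| = (2*(s*(1+4*q))) * (|A4 + q| * |A2|) := by ring
      _ ≤ (2*2) * (2*q^3*2) :=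
          mul_le_mul (by linarith : 2*(s*(1+4*q)) ≤ 2*2) hin
            (mul_nonneg (abs_nonneg _) (abs_nonneg _)) (by norm_num)
      _ = 16*q^3 := by ring
  have h1' := abs_le.1 h1
  have h2' := abs_le.1 h2
  have h3' := abs_le.1 h3
  have h4' := abs_le.1 h4
  have h5' := abs_le.1 h5
  have hN : |N| ≤ 24*q^2 := by
    rw [hNexp, abs_le]
    constructor <;> linarith
  -- bound the denominator from below
  have hD5 : c^2/5 ≤ D := by
    have h45 := mul_le_mul hP4 hA2c (by positivity) (by linarith)
    calc c^2/5 = (2/5*(c/2))*c := by ring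
      _ ≤ ((1+2*A4)*A2)*c := mul_le_mul_of_nonneg_right h45 hc.le
      _ = D := by rw [hD_def]
  calc |N| / D ≤ (24*q^2) / (c^2/5) :=
        div_le_div₀ (by positivity) hN (by positivity) hD5
    _ = 120 / c^2 * q^2 := by field_simp; ring
end
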